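/- The piecewise attached–detached function is a solution with constant energy: Let L > 0, ρ = μ = 1, let Φ₀ be the prototype adhesive potential, set t* = π/(4√2), and define u : [0,∞)×[0,L] → ℝ by u(t,x) = √2·sin(√2·t) for 0 ≤ t ≤ t* and u(t,x) = √2·t + 1 − π/4 for t ≥ t*. Then: (i) u(0,x) = 0 and ∂_t u(0,x) = 2 for every x; (ii) for every t ∈ (0,∞) with t ≠ t* and every x ∈ (0,L), |u(t,x)| ≠ 1 and ∂²_t u(t,x) = −∂⁴ₓu(t,x) − Φ₀'(u(t,x)) (for t < t* one has 0 ≤ u(t,x) < 1 and Φ₀'(u) = 2u, for t > t* one has u(t,x) > 1 and Φ₀'(u) = 0); (iii) u trivially satisfies the free-end boundary conditions ∂²ₓu = ∂³ₓu = 0 at x = 0, L; and (iv) the energy ∫₀^L (((∂_t u(t,x))² + (∂²ₓu(t,x))²)/2 + Φ₀(u(t,x))) dx equals 2L for every t ≥ 0, including across the transition time t*. -/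

import Mathlib

open MeasureTheory Filter Set intervalIntegral Real Topology

/-- The prototype adhesive potential `Φ₀(s) = s²` for `|s| ≤ 1`, `Φ₀(s) = 1` for `|s| > 1`. -/
noncomputable def Phi0 (s : ℝ) : ℝ := if |s| ≤ 1 then s ^ 2 else 1

/-- The prototype adhesive force `Φ₀'(s) = 2s` for `|s| < 1`, `Φ₀'(s) = 0` for `|s| > 1`. -/
noncomputable def Phi0' (s : ℝ) : ℝ := if |s| < 1 then 2 * s else 0

namespace PWAux

noncomputable def ts : ℝ := π / (4 * Real.sqrt 2)

noncomputable def f (t : ℝ) : ℝ :=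
  if t ≤ ts then Real.sqrt 2 * Real.sin (Real.sqrt 2 * t) else Real.sqrt 2 * t + 1 - π / 4

noncomputable def g (t : ℝ) : ℝ :=
  if t ≤ ts then 2 * Real.cos (Real.sqrt 2 * t) else Real.sqrt 2

lemma sqrt2_pos : 0 < Real.sqrt 2 := Real.sqrt_pos.mpr (by norm_num)

lemma sqrt2_sq : Real.sqrt 2 * Real.sqrt 2 = 2 := Real.mul_self_sqrt (by norm_num)

lemma ts_pos : 0 < ts := div_pos Real.pi_pos (by positivity)

lemma sqrt2_ts : Real.sqrt 2 * ts = π / 4 := by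
  rw [ts]
  field_simp

lemma hasDerivAt_s (t : ℝ) :
    HasDerivAt (fun τ => Real.sqrt 2 * Real.sin (Real.sqrt 2 * τ))
      (2 * Real.cos (Real.sqrt 2 * t)) t := by
  have h1 : HasDerivAt (fun τ : ℝ => Real.sqrt 2 * τ) (Real.sqrt 2) t := by
    simpa using (hasDerivAt_id t).const_mul (Real.sqrt 2)
  have h2 : HasDerivAt (fun τ => Real.sin (Real.sqrt 2 * τ))
      (Real.cos (Real.sqrt 2 * t) * Real.sqrt 2) t := by
    simpa [Function.comp_def] using (Real.hasDerivAt_sin (Real.sqrt 2 * t)).comp t h1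
  have h3 := h2.const_mul (Real.sqrt 2)
  have he : Real.sqrt 2 * (Real.cos (Real.sqrt 2 * t) * Real.sqrt 2)
      = 2 * Real.cos (Real.sqrt 2 * t) := by
    linear_combination Real.cos (Real.sqrt 2 * t) * sqrt2_sq
  rwa [he] at h3

lemma hasDerivAt_c (t : ℝ) :
    HasDerivAt (fun τ => 2 * Real.cos (Real.sqrt 2 * τ))
      (-(2 * (Real.sqrt 2 * Real.sin (Real.sqrt 2 * t)))) t := by
  have h1 : HasDerivAt (fun τ : ℝ => Real.sqrt 2 * τ) (Real.sqrt 2) t := by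
    simpa using (hasDerivAt_id t).const_mul (Real.sqrt 2)
  have h2 : HasDerivAt (fun τ => Real.cos (Real.sqrt 2 * τ))
      (-Real.sin (Real.sqrt 2 * t) * Real.sqrt 2) t := by
    simpa [Function.comp_def] using (Real.hasDerivAt_cos (Real.sqrt 2 * t)).comp t h1
  have h3 := h2.const_mul (2 : ℝ)
  have he : (2 : ℝ) * (-Real.sin (Real.sqrt 2 * t) * Real.sqrt 2)
      = -(2 * (Real.sqrt 2 * Real.sin (Real.sqrt 2 * t))) := by ring
  rwa [he] at h3

lemma hasDerivAt_l (t : ℝ) :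
    HasDerivAt (fun τ : ℝ => Real.sqrt 2 * τ + 1 - π / 4) (Real.sqrt 2) t := by
  simpa using (((hasDerivAt_id t).const_mul (Real.sqrt 2)).add_const 1).sub_const (π / 4)

lemma f_ts : f ts = 1 := by
  rw [f, if_pos le_rfl, sqrt2_ts, Real.sin_pi_div_four]
  linear_combination sqrt2_sq / 2

lemma two_cos_ts : 2 * Real.cos (Real.sqrt 2 * ts) = Real.sqrt 2 := by
  rw [sqrt2_ts, Real.cos_pi_div_four]; ring

lemma hasDerivAt_f (t : ℝ) : HasDerivAt f (g t) t := by
  rcases lt_trichotomy t ts with h | h | h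
  · have hev : f =ᶠ[𝓝 t] fun τ => Real.sqrt 2 * Real.sin (Real.sqrt 2 * τ) :=
      eventually_of_mem (Iio_mem_nhds h) (fun τ hτ => if_pos (le_of_lt hτ))
    have := (hasDerivAt_s t).congr_of_eventuallyEq hev
    simpa [g, h.le] using this
  · subst h
    have h1 : HasDerivWithinAt f (Real.sqrt 2) (Iic ts) ts := by
      have hs := (hasDerivAt_s ts).hasDerivWithinAt (s := Iic ts)
      rw [two_cos_ts] at hs
      exact hs.congr (fun y hy => if_pos hy) (if_pos le_rfl)
    have h2 : HasDerivWithinAt f (Real.sqrt 2) (Ici ts) ts := by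
      have hl := (hasDerivAt_l ts).hasDerivWithinAt (s := Ici ts)
      refine hl.congr (fun y hy => ?_) ?_
      · rcases eq_or_lt_of_le (mem_Ici.mp hy) with h' | h'
        · rw [← h', f_ts]
          rw [sqrt2_ts]; ring
        · exact if_neg (not_le.mpr h')
      · rw [f_ts, sqrt2_ts]; ring
    have h3 := h1.union h2
    rw [Iic_union_Ici, hasDerivWithinAt_univ] at h3
    have : g ts = Real.sqrt 2 := by rw [g, if_pos le_rfl, two_cos_ts]
    rwa [this]
  · have hev : f =ᶠ[𝓝 t] fun τ => Real.sqrt 2 * τ + 1 - π / 4 :=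
      eventually_of_mem (Ioi_mem_nhds h) (fun τ hτ => if_neg (not_le.mpr hτ))
    have := (hasDerivAt_l t).congr_of_eventuallyEq hev
    simpa [g, not_le.mpr h] using this

lemma deriv_f : deriv f = g := funext fun t => (hasDerivAt_f t).deriv

lemma deriv_g_lt {t : ℝ} (h : t < ts) :
    deriv g t = -(2 * (Real.sqrt 2 * Real.sin (Real.sqrt 2 * t))) := by
  have hev : g =ᶠ[𝓝 t] fun τ => 2 * Real.cos (Real.sqrt 2 * τ) :=
    eventually_of_mem (Iio_mem_nhds h) (fun τ hτ => if_pos (le_of_lt hτ))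
  exact ((hasDerivAt_c t).congr_of_eventuallyEq hev).deriv

lemma deriv_g_gt {t : ℝ} (h : ts < t) : deriv g t = 0 := by
  have hev : g =ᶠ[𝓝 t] fun _ => Real.sqrt 2 :=
    eventually_of_mem (Ioi_mem_nhds h) (fun τ hτ => if_neg (not_le.mpr hτ))
  exact ((hasDerivAt_const t (Real.sqrt 2)).congr_of_eventuallyEq hev).deriv

lemma iteratedDeriv_zero_fun : ∀ n : ℕ, iteratedDeriv n (fun _ : ℝ => (0 : ℝ)) = fun _ => 0
  | 0 => by simp [iteratedDeriv_zero]
  | n + 1 => by rw [iteratedDeriv_succ', deriv_const']; exact iteratedDeriv_zero_fun n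

lemma iteratedDeriv_const_fun (n : ℕ) (hn : n ≠ 0) (c : ℝ) :
    iteratedDeriv n (fun _ : ℝ => c) = fun _ => 0 := by
  obtain ⟨m, rfl⟩ := Nat.exists_eq_succ_of_ne_zero hn
  rw [iteratedDeriv_succ', deriv_const']
  exact iteratedDeriv_zero_fun m

lemma f_mem_le {t : ℝ} (h0 : 0 ≤ t) (h : t ≤ ts) :
    0 ≤ f t ∧ f t ≤ 1 := by
  rw [f, if_pos h]
  have hθ0 : 0 ≤ Real.sqrt 2 * t := by positivity
  have hθ : Real.sqrt 2 * t ≤ π / 4 := by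
    rw [← sqrt2_ts]; exact mul_le_mul_of_nonneg_left h sqrt2_pos.le
  have hpi : 0 < π := Real.pi_pos
  have hs0 : 0 ≤ Real.sin (Real.sqrt 2 * t) :=
    Real.sin_nonneg_of_nonneg_of_le_pi hθ0 (by linarith)
  have hs1 : Real.sin (Real.sqrt 2 * t) ≤ Real.sqrt 2 / 2 := by
    have := Real.strictMonoOn_sin.monotoneOn
      (by constructor <;> [linarith; linarith] : Real.sqrt 2 * t ∈ Icc (-(π/2)) (π/2))
      (by constructor <;> [linarith; linarith] : π / 4 ∈ Icc (-(π/2)) (π/2)) hθ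
    rwa [Real.sin_pi_div_four] at this
  constructor
  · positivity
  · nlinarith [sqrt2_sq, sqrt2_pos]

lemma f_gt {t : ℝ} (h : ts < t) : 1 < f t := by
  rw [f, if_neg (not_le.mpr h)]
  have := mul_lt_mul_of_pos_left h sqrt2_pos
  rw [sqrt2_ts] at this
  linarith

end PWAux

open PWAux in
/-- **The piecewise attached–detached function is a solution with constant energy.**
With `ρ = μ = 1`, `t* = π/(4√2)` and `u(t,x) = √2 sin(√2 t)` for `t ≤ t*`,
`u(t,x) = √2 t + 1 - π/4` for `t ≥ t*`: `u` has initial data `(0, 2)`, solves the adhesive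
beam equation `∂ₜ²u = -∂ₓ⁴u - Φ₀'(u)` away from the transition time `t*` (never touching
`|u| = 1` there), satisfies the free-end boundary conditions, and its energy is constant
equal to `2L`, including across the transition time. -/
theorem piecewise_solution_constant_energy
    (L : ℝ) (hL : 0 < L)
    (u : ℝ → ℝ → ℝ)
    (hu : ∀ t x, u t x =
      if t ≤ π / (4 * Real.sqrt 2) then Real.sqrt 2 * Real.sin (Real.sqrt 2 * t)
      else Real.sqrt 2 * t + 1 - π / 4) :
    -- (i) initial conditions
    (∀ x ∈ Icc 0 L, u 0 x = 0 ∧ deriv (fun τ => u τ x) 0 = 2) ∧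
    -- (ii) the PDE holds for every t > 0 with t ≠ t*, and |u| ≠ 1 there
    (∀ t ∈ Ioi (0:ℝ), t ≠ π / (4 * Real.sqrt 2) → ∀ x ∈ Ioo 0 L,
      |u t x| ≠ 1 ∧
      deriv (deriv (fun τ => u τ x)) t
        = -(iteratedDeriv 4 (fun y => u t y) x) - Phi0' (u t x)) ∧
    -- (iii) free-end boundary conditions
    (∀ t ∈ Ici (0:ℝ),
      iteratedDeriv 2 (fun y => u t y) 0 = 0 ∧ iteratedDeriv 2 (fun y => u t y) L = 0 ∧
      iteratedDeriv 3 (fun y => u t y) 0 = 0 ∧ iteratedDeriv 3 (fun y => u t y) L = 0) ∧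
    -- (iv) the energy is constant, equal to 2L
    (∀ t ∈ Ici (0:ℝ),
      (∫ x in (0:ℝ)..L,
          (((deriv (fun τ => u τ x) t) ^ 2 + (iteratedDeriv 2 (fun y => u t y) x) ^ 2) / 2
            + Phi0 (u t x)))
        = 2 * L) := by
  have hft : ∀ t x, u t x = f t := fun t x => by rw [hu t x, f, ts]
  have e1 : ∀ x, (fun τ => u τ x) = f := fun x => funext fun τ => hft τ x
  have e2 : ∀ t, (fun y => u t y) = fun _ : ℝ => f t := fun t => funext fun y => hft t y
  have hconst : ∀ (n : ℕ), n ≠ 0 → ∀ t x : ℝ, iteratedDeriv n (fun y => u t y) x = 0 := by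
    intro n hn t x
    rw [e2, iteratedDeriv_const_fun n hn]
  refine ⟨?_, ?_, ?_, ?_⟩
  · -- initial conditions
    intro x _
    constructor
    · rw [hft, f, if_pos ts_pos.le]
      simp
    · rw [e1, deriv_f, g, if_pos ts_pos.le]
      simp
  · -- the PDE
    intro t ht htne x _
    have htne' : t ≠ ts := by rwa [ts]
    have ht0 : 0 < t := ht
    rcases lt_or_gt_of_ne htne' with h | h
    · -- attached phase
      have hθ0 : 0 < Real.sqrt 2 * t := by positivity
      have hθ : Real.sqrt 2 * t < π / 4 := by
        rw [← sqrt2_ts]; exact mul_lt_mul_of_pos_left h sqrt2_pos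
      have hpi : 0 < π := Real.pi_pos
      have hs0 : 0 < Real.sin (Real.sqrt 2 * t) :=
        Real.sin_pos_of_pos_of_lt_pi hθ0 (by linarith)
      have hs1 : Real.sin (Real.sqrt 2 * t) < Real.sqrt 2 / 2 := by
        have := Real.strictMonoOn_sin
          (by constructor <;> [linarith; linarith] : Real.sqrt 2 * t ∈ Icc (-(π/2)) (π/2))
          (by constructor <;> [linarith; linarith] : π / 4 ∈ Icc (-(π/2)) (π/2)) hθ
        rwa [Real.sin_pi_div_four] at this
      have hfval : f t = Real.sqrt 2 * Real.sin (Real.sqrt 2 * t) := by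
        rw [f, if_pos h.le]
      have hu0 : 0 < f t := by rw [hfval]; positivity
      have hu1 : f t < 1 := by
        rw [hfval]; nlinarith [sqrt2_sq, sqrt2_pos]
      have habs : |f t| < 1 := abs_lt.mpr ⟨by linarith, hu1⟩
      constructor
      · rw [hft]; exact ne_of_lt habs
      · rw [e1, deriv_f, deriv_g_lt h, hconst 4 (by norm_num), hft,
          Phi0', if_pos habs, hfval]
        ring
    · -- detached phase
      have hu1 : 1 < f t := f_gt h
      have habs : 1 < |f t| := lt_of_lt_of_le hu1 (le_abs_self _)
      constructor
      · rw [hft]; exact (ne_of_lt habs).symm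
      · rw [e1, deriv_f, deriv_g_gt h, hconst 4 (by norm_num), hft,
          Phi0', if_neg (not_lt.mpr habs.le)]
        ring
  · -- boundary conditions
    intro t _
    exact ⟨hconst 2 (by norm_num) t 0, hconst 2 (by norm_num) t L,
      hconst 3 (by norm_num) t 0, hconst 3 (by norm_num) t L⟩
  · -- constant energy
    intro t ht
    have ht0 : (0:ℝ) ≤ t := ht
    have hdensity : (g t ^ 2 + (0:ℝ) ^ 2) / 2 + Phi0 (f t) = 2 := by
      rcases le_or_gt t ts with h | h
      · obtain ⟨hu0, hu1⟩ := f_mem_le ht0 h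
        have habs : |f t| ≤ 1 := abs_le.mpr ⟨by linarith, hu1⟩
        rw [g, if_pos h, Phi0, if_pos habs, f, if_pos h]
        have pyth := Real.sin_sq_add_cos_sq (Real.sqrt 2 * t)
        nlinarith [sqrt2_sq]
      · have hu1 : 1 < f t := f_gt h
        have habs : 1 < |f t| := lt_of_lt_of_le hu1 (le_abs_self _)
        rw [g, if_neg (not_le.mpr h), Phi0, if_neg (not_le.mpr habs)]
        nlinarith [sqrt2_sq]
    have hI : ∀ x : ℝ,
        ((deriv (fun τ => u τ x) t) ^ 2 + (iteratedDeriv 2 (fun y => u t y) x) ^ 2) / 2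
          + Phi0 (u t x) = 2 := by
      intro x
      rw [e1, deriv_f, hconst 2 (by norm_num), hft]
      exact hdensity
    calc (∫ x in (0:ℝ)..L,
          (((deriv (fun τ => u τ x) t) ^ 2 + (iteratedDeriv 2 (fun y => u t y) x) ^ 2) / 2
            + Phi0 (u t x)))
        = ∫ _ in (0:ℝ)..L, (2:ℝ) := by simp only [hI]
      _ = 2 * L := by rw [intervalIntegral.integral_const, smul_eq_mul]; ring
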